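/- arXiv:2306.11589 — 4 statements merged into one kernel-verified Lean document; each statement's English description precedes it below -/
import Mathlib

section
/- Let K be an N×N symmetric positive semi-definite matrix, Σ an N×N symmetric positive definite matrix with Cholesky factorization Σ = LLᵀ, f ∈ ℝᴺ and s ∈ ℝᴺ fixed vectors. Then the two functions α ↦ ‖f + Ls − Kα‖²_{Σ⁻¹} + αᵀKα and α ↦ ‖f − Kα‖²_{Σ⁻¹} + (α − L⁻ᵀs)ᵀK(α − L⁻ᵀs) have identical gradients with respect to α, and hence differ by a constant independent of α. (Here ‖w‖²_{Σ⁻¹} = wᵀΣ⁻¹w.) -/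
open Matrix

lemma symm_dot_swap {N : ℕ} (M : Matrix (Fin N) (Fin N) ℝ) (hM : Mᵀ = M)
    (a b : Fin N → ℝ) : a ⬝ᵥ M.mulVec b = b ⬝ᵥ M.mulVec a := by
  rw [dotProduct_mulVec, ← mulVec_transpose, hM, dotProduct_comm]

/-- The standard and variance-reduced sample-then-optimize objectives have identical
gradients and hence differ by a constant. -/
theorem sample_then_optimize_objectives_same_gradient {N : ℕ}
    (K S L : Matrix (Fin N) (Fin N) ℝ)
    (hK : K.PosSemidef) (hS : S.PosDef) (hChol : S = L * Lᵀ) (hL : IsUnit L.det)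
    (f s : Fin N → ℝ)
    (L1 L2 : (Fin N → ℝ) → ℝ)
    (hL1 : ∀ α, L1 α = (f + L.mulVec s - K.mulVec α) ⬝ᵥ S⁻¹.mulVec (f + L.mulVec s - K.mulVec α)
        + α ⬝ᵥ K.mulVec α)
    (hL2 : ∀ α, L2 α = (f - K.mulVec α) ⬝ᵥ S⁻¹.mulVec (f - K.mulVec α)
        + (α - (Lᵀ)⁻¹.mulVec s) ⬝ᵥ K.mulVec (α - (Lᵀ)⁻¹.mulVec s)) :
    (∀ α : Fin N → ℝ, fderiv ℝ L1 α = fderiv ℝ L2 α) ∧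
      ∃ c : ℝ, ∀ α : Fin N → ℝ, L1 α = L2 α + c := by
  set w : Fin N → ℝ := (Lᵀ)⁻¹.mulVec s with hw_def
  have hKsym : Kᵀ = K := by simpa using hK.1.eq
  have hSsym : S⁻¹ᵀ = S⁻¹ := by
    have hSs : Sᵀ = S := by simpa using hS.1.eq
    rw [transpose_nonsing_inv, hSs]
  have hLT : IsUnit (Lᵀ).det := by rwa [det_transpose]
  have hw : S⁻¹.mulVec (L.mulVec s) = w := by
    rw [hChol, Matrix.mul_inv_rev, mulVec_mulVec, Matrix.mul_assoc,
      Matrix.nonsing_inv_mul L hL, Matrix.mul_one]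
  have key : ∀ α : Fin N → ℝ, L1 α = L2 α +
      (2 * (f ⬝ᵥ w) + (L.mulVec s) ⬝ᵥ S⁻¹.mulVec (L.mulVec s) - w ⬝ᵥ K.mulVec w) := by
    intro α
    rw [hL1, hL2]
    have e1 : (f + L.mulVec s - K.mulVec α) ⬝ᵥ S⁻¹.mulVec (f + L.mulVec s - K.mulVec α)
        = (f - K.mulVec α) ⬝ᵥ S⁻¹.mulVec (f - K.mulVec α)
          + 2 * ((f - K.mulVec α) ⬝ᵥ S⁻¹.mulVec (L.mulVec s))
          + (L.mulVec s) ⬝ᵥ S⁻¹.mulVec (L.mulVec s) := by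
      have h := symm_dot_swap S⁻¹ hSsym (L.mulVec s) (f - K.mulVec α)
      have : f + L.mulVec s - K.mulVec α = (f - K.mulVec α) + L.mulVec s := by ring_nf
      rw [this]
      simp only [mulVec_add, dotProduct_add, add_dotProduct]
      linarith
    have e2 : (α - w) ⬝ᵥ K.mulVec (α - w)
        = α ⬝ᵥ K.mulVec α - 2 * (α ⬝ᵥ K.mulVec w) + w ⬝ᵥ K.mulVec w := by
      have h := symm_dot_swap K hKsym w α
      simp only [mulVec_sub, dotProduct_sub, sub_dotProduct]
      linarith
    have e3 : (f - K.mulVec α) ⬝ᵥ S⁻¹.mulVec (L.mulVec s) = f ⬝ᵥ w - α ⬝ᵥ K.mulVec w := by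
      rw [hw, sub_dotProduct, dotProduct_comm (K.mulVec α) w, symm_dot_swap K hKsym w α]
    rw [e1, e2, e3]
    ring
  refine ⟨fun α => ?_, _, key⟩
  have : L1 = fun x => L2 x +
      (2 * (f ⬝ᵥ w) + (L.mulVec s) ⬝ᵥ S⁻¹.mulVec (L.mulVec s) - w ⬝ᵥ K.mulVec w) :=
    funext key
  rw [this, fderiv_add_const]
end

section
/- Let K_{zz} be M×M symmetric positive definite, K_{xz} an N×M matrix with transpose K_{zx}, and Σ an N×N symmetric positive definite matrix. Define Q = K_{xz} K_{zz}⁻¹ K_{zx}. Then for any w, w' ∈ ℝᴹ (representing evaluation vectors K_{z(·)} at two points) the following covariance identity holds: wᵀ K_{zz}⁻¹ K_{zx} (Q + Σ)⁻¹ K_{xz} K_{zz}⁻¹ w' = wᵀ (K_{zz}⁻¹ − (K_{zx} Σ⁻¹ K_{xz} + K_{zz})⁻¹) w'. Equivalently, K_{zz}⁻¹ K_{zx} (Q + Σ)⁻¹ K_{xz} K_{zz}⁻¹ = K_{zz}⁻¹ − (K_{zx} Σ⁻¹ K_{xz} + K_{zz})⁻¹. -/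
open Matrix

/-- The pathwise-conditioned inducing point covariance matches the KL-optimal variational
posterior covariance of Titsias. -/
theorem inducing_point_covariance_identity {N M : ℕ}
    (Kzz : Matrix (Fin M) (Fin M) ℝ) (hKzz : Kzz.PosDef)
    (Kxz : Matrix (Fin N) (Fin M) ℝ)
    (S : Matrix (Fin N) (Fin N) ℝ) (hS : S.PosDef)
    (Q : Matrix (Fin N) (Fin N) ℝ) (hQ : Q = Kxz * Kzz⁻¹ * Kxzᵀ) :
    (∀ w w' : Fin M → ℝ,
      w ⬝ᵥ (Kzz⁻¹ * Kxzᵀ * (Q + S)⁻¹ * Kxz * Kzz⁻¹).mulVec w' =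
        w ⬝ᵥ (Kzz⁻¹ - (Kxzᵀ * S⁻¹ * Kxz + Kzz)⁻¹).mulVec w') ∧
      Kzz⁻¹ * Kxzᵀ * (Q + S)⁻¹ * Kxz * Kzz⁻¹ =
        Kzz⁻¹ - (Kxzᵀ * S⁻¹ * Kxz + Kzz)⁻¹ := by
  have hQS : (Q + S).PosDef := by
    rw [hQ]
    have hsemi := hKzz.inv.posSemidef.mul_mul_conjTranspose_same Kxz
    have hsemi' : (Kxz * Kzz⁻¹ * Kxzᵀ).PosSemidef := by
      simpa [Matrix.conjTranspose_eq_transpose_of_trivial] using hsemi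
    exact Matrix.PosDef.posSemidef_add hsemi' hS
  have hA1 : Kzz⁻¹ * Kzz = 1 := Matrix.nonsing_inv_mul _ hKzz.det_pos.ne'.isUnit
  have hSS : S * S⁻¹ = 1 := Matrix.mul_nonsing_inv _ hS.det_pos.ne'.isUnit
  have hC : (Q + S)⁻¹ * (Q + S) = 1 := Matrix.nonsing_inv_mul _ hQS.det_pos.ne'.isUnit
  have hkey : (Q + S)⁻¹ * (Kxz * (Kzz⁻¹ * Kxzᵀ)) = 1 - (Q + S)⁻¹ * S := by
    rw [mul_add] at hC
    rw [show Kxz * (Kzz⁻¹ * Kxzᵀ) = Q from by rw [hQ, Matrix.mul_assoc]]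
    exact eq_sub_of_add_eq hC
  have e : ∀ X : Matrix (Fin N) (Fin M) ℝ,
      (Q + S)⁻¹ * (Kxz * (Kzz⁻¹ * (Kxzᵀ * X))) = X - (Q + S)⁻¹ * (S * X) := by
    intro X
    calc (Q + S)⁻¹ * (Kxz * (Kzz⁻¹ * (Kxzᵀ * X)))
        = ((Q + S)⁻¹ * (Kxz * (Kzz⁻¹ * Kxzᵀ))) * X := by
          simp only [Matrix.mul_assoc]
      _ = (1 - (Q + S)⁻¹ * S) * X := by rw [hkey]
      _ = X - (Q + S)⁻¹ * (S * X) := by rw [Matrix.sub_mul, Matrix.one_mul, Matrix.mul_assoc]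
  have main : (Kzz⁻¹ - Kzz⁻¹ * Kxzᵀ * (Q + S)⁻¹ * Kxz * Kzz⁻¹) *
      (Kxzᵀ * S⁻¹ * Kxz + Kzz) = 1 := by
    have hSSB : S * (S⁻¹ * Kxz) = Kxz := by
      rw [← Matrix.mul_assoc, hSS, Matrix.one_mul]
    simp only [Matrix.mul_add, Matrix.sub_mul, Matrix.mul_assoc]
    rw [e (S⁻¹ * Kxz), hSSB, hA1]
    simp only [Matrix.mul_sub, Matrix.mul_one]
    abel
  have hinv : (Kxzᵀ * S⁻¹ * Kxz + Kzz)⁻¹ =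
      Kzz⁻¹ - Kzz⁻¹ * Kxzᵀ * (Q + S)⁻¹ * Kxz * Kzz⁻¹ :=
    Matrix.inv_eq_left_inv main
  have hmat : Kzz⁻¹ * Kxzᵀ * (Q + S)⁻¹ * Kxz * Kzz⁻¹ =
      Kzz⁻¹ - (Kxzᵀ * S⁻¹ * Kxz + Kzz)⁻¹ := by
    rw [hinv, sub_sub_cancel]
  exact ⟨fun w w' => by rw [hmat], hmat⟩
end

section
/- Under the same gradient descent setup with M = I − (η/σ²)K(K+σ²I), α* = (K+σ²I)⁻¹y, and eigenpairs (λᵢ, uᵢ) of K, for every step t ≥ 0 and every i: |uᵢᵀ(α* − α_t)| = ((1 − βᵢ)ᵗ/(λᵢ + σ²)) |uᵢᵀ y| ≤ ((1 − βᵢ)ᵗ/σ²) ‖y‖₂, where βᵢ = (η/σ²)λᵢ(λᵢ + σ²). -/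
open Matrix

/-- Eigendirection-wise error of gradient descent iterates:
`|uᵢᵀ(α* − α_t)| = ((1−βᵢ)ᵗ/(λᵢ+σ²))|uᵢᵀy| ≤ ((1−βᵢ)ᵗ/σ²)‖y‖₂`. -/
theorem gd_eigendirection_error {N : ℕ}
    (K : Matrix (Fin N) (Fin N) ℝ) (hK : K.PosDef)
    (σ2 : ℝ) (hσ : 0 < σ2) (y : Fin N → ℝ)
    (lam : Fin N → ℝ) (u : Fin N → (Fin N → ℝ))
    (hlam : ∀ i, 0 < lam i)
    (heig : ∀ i, K.mulVec (u i) = lam i • u i)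
    (horth : ∀ i j, u i ⬝ᵥ u j = if i = j then 1 else 0)
    (lam1 : ℝ) (hlam1 : ∀ i, lam i ≤ lam1)
    (η : ℝ) (hη : 0 < η) (hη' : η < σ2 / (lam1 * (lam1 + σ2)))
    (α : ℕ → (Fin N → ℝ)) (hα0 : α 0 = 0)
    (hrec : ∀ t, α (t + 1) =
      α t - η • ((1 / σ2) • ((K * (K + σ2 • (1 : Matrix (Fin N) (Fin N) ℝ))).mulVec (α t)
        - K.mulVec y)))
    (αstar : Fin N → ℝ)
    (hαstar : αstar = (K + σ2 • (1 : Matrix (Fin N) (Fin N) ℝ))⁻¹.mulVec y)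
    (β : Fin N → ℝ) (hβ : ∀ i, β i = (η / σ2) * lam i * (lam i + σ2)) :
    ∀ (t : ℕ) (i : Fin N),
      |u i ⬝ᵥ (αstar - α t)| = ((1 - β i) ^ t / (lam i + σ2)) * |u i ⬝ᵥ y| ∧
      |u i ⬝ᵥ (αstar - α t)| ≤ ((1 - β i) ^ t / σ2) * Real.sqrt (y ⬝ᵥ y) := by
  set A : Matrix (Fin N) (Fin N) ℝ := K + σ2 • (1 : Matrix (Fin N) (Fin N) ℝ) with hA
  have hKT : Kᵀ = K := Matrix.IsSymm.eq (by simpa using hK.1)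
  have hdotK : ∀ i (v : Fin N → ℝ), u i ⬝ᵥ K.mulVec v = lam i * (u i ⬝ᵥ v) := by
    intro i v
    rw [dotProduct_mulVec, ← mulVec_transpose, hKT, heig, smul_dotProduct, smul_eq_mul]
  have hdotA : ∀ i (v : Fin N → ℝ), u i ⬝ᵥ A.mulVec v = (lam i + σ2) * (u i ⬝ᵥ v) := by
    intro i v
    rw [hA, add_mulVec, dotProduct_add, hdotK, smul_mulVec, one_mulVec,
      dotProduct_smul, smul_eq_mul]
    ring
  have hApd : A.PosDef := by
    refine hK.add_posSemidef (posSemidef_iff_dotProduct_mulVec.mpr ⟨?_, ?_⟩)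
    · simp [Matrix.IsHermitian]
    · intro x
      simp only [smul_mulVec, one_mulVec, dotProduct_smul, smul_eq_mul]
      exact mul_nonneg hσ.le (dotProduct_star_self_nonneg x)
  have hAinv : A * A⁻¹ = 1 := mul_nonsing_inv _ ((Matrix.isUnit_iff_isUnit_det A).mp hApd.isUnit)
  have hsolve : A.mulVec αstar = y := by
    rw [hαstar, mulVec_mulVec, hAinv, one_mulVec]
  have hstar : ∀ i, (lam i + σ2) * (u i ⬝ᵥ αstar) = u i ⬝ᵥ y := fun i => by
    rw [← hdotA, hsolve]
  have hKy : K.mulVec y = (K * A).mulVec αstar := by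
    rw [← hsolve, mulVec_mulVec]
  have hstep : ∀ t i, u i ⬝ᵥ (αstar - α (t + 1)) = (1 - β i) * (u i ⬝ᵥ (αstar - α t)) := by
    intro t i
    have h1 : αstar - α (t + 1) = (αstar - α t) - (η / σ2) • (K * A).mulVec (αstar - α t) := by
      rw [hrec t, hKy]
      have h2 : (K * A).mulVec (α t) - (K * A).mulVec αstar
          = -((K * A).mulVec (αstar - α t)) := by
        rw [← mulVec_sub, ← mulVec_neg, neg_sub]
      rw [h2]
      ext j
      simp only [Pi.sub_apply, Pi.smul_apply, Pi.neg_apply, smul_eq_mul]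
      ring
    rw [h1, dotProduct_sub, dotProduct_smul, ← mulVec_mulVec, hdotK, hdotA, hβ, smul_eq_mul]
    ring
  have hclosed : ∀ t i, u i ⬝ᵥ (αstar - α t) = (1 - β i) ^ t * (u i ⬝ᵥ αstar) := by
    intro t
    induction t with
    | zero => intro i; simp [hα0]
    | succ t ih =>
      intro i
      rw [hstep t i, ih i, pow_succ]
      ring
  intro t i
  have hli : 0 < lam i + σ2 := by linarith [hlam i, hσ]
  have hlam1pos : 0 < lam1 := lt_of_lt_of_le (hlam i) (hlam1 i)
  have hden : 0 < lam1 * (lam1 + σ2) := by nlinarith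
  have hβlt : η * (lam i * (lam i + σ2)) < σ2 := by
    have h1 : η * (lam1 * (lam1 + σ2)) < σ2 := (lt_div_iff₀ hden).mp hη'
    have h2 : lam i * (lam i + σ2) ≤ lam1 * (lam1 + σ2) := by nlinarith [hlam i, hlam1 i]
    nlinarith
  have hbpos : 0 < 1 - β i := by
    rw [hβ]
    have : (η / σ2) * lam i * (lam i + σ2) < 1 := by
      rw [div_mul_eq_mul_div, div_mul_eq_mul_div, div_lt_one hσ, mul_assoc]
      exact hβlt
    linarith
  have hbt : 0 < (1 - β i) ^ t := pow_pos hbpos t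
  have hy' : u i ⬝ᵥ αstar = (u i ⬝ᵥ y) / (lam i + σ2) := by
    field_simp
    linarith [hstar i]
  have heqn : |u i ⬝ᵥ (αstar - α t)| = ((1 - β i) ^ t / (lam i + σ2)) * |u i ⬝ᵥ y| := by
    rw [hclosed t i, hy', abs_mul, abs_div, abs_of_pos hbt, abs_of_pos hli]
    ring
  refine ⟨heqn, ?_⟩
  rw [heqn]
  have hcs : |u i ⬝ᵥ y| ≤ Real.sqrt (y ⬝ᵥ y) := by
    have h2 : (u i ⬝ᵥ y) ^ 2 ≤ (u i ⬝ᵥ u i) * (y ⬝ᵥ y) := by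
      have := Finset.sum_mul_sq_le_sq_mul_sq Finset.univ (u i) y
      simpa [dotProduct, sq] using this
    rw [horth i i] at h2
    simp at h2
    calc |u i ⬝ᵥ y| = Real.sqrt ((u i ⬝ᵥ y) ^ 2) := by
          rw [Real.sqrt_sq_eq_abs]
      _ ≤ Real.sqrt (y ⬝ᵥ y) := Real.sqrt_le_sqrt h2
  have hdiv : (1 - β i) ^ t / (lam i + σ2) ≤ (1 - β i) ^ t / σ2 := by
    apply div_le_div_of_nonneg_left hbt.le hσ
    linarith [hlam i]
  exact mul_le_mul hdiv hcs (abs_nonneg _) (by positivity)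
end

section
/- Let K be an N×N symmetric positive definite matrix, Σ = σ²I with σ² > 0, and let α* = (K + Σ)⁻¹(f + ε) where f, ε ∈ ℝᴺ. Consider the difference of single-sample minibatch gradient covariances Δ = N·Cov(Kε) − 2N·Cov(KKα*, Kε) taken over the joint Gaussian randomness f ∼ N(0, K), ε ∼ N(0, Σ). Then Δ = N·U Λ² σ² (I − 2Λ(Λ + σ²I)⁻¹) Uᵀ, where K = UΛUᵀ. In particular, the difference is positive semi-definite if and only if λᵢ ≤ σ² for all eigenvalues λᵢ of K. -/
open Matrix

/-- Difference of single-sample minibatch gradient covariances at convergence.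
With `f ∼ N(0,K)` and `ε ∼ N(0,σ²I)` independent and `α* = (K+σ²I)⁻¹(f+ε)`, one has
`Cov(Kε) = σ²K²` and `Cov(KKα*, Kε) = σ²K²(K+σ²I)⁻¹K`, so the covariance difference
`Δ = N·Cov(Kε) − 2N·Cov(KKα*, Kε) = N(KΣK − 2K²(K+Σ)⁻¹ΣK)` satisfies
`Δ = N·UΛ²σ²(I − 2Λ(Λ+σ²I)⁻¹)Uᵀ`, which is positive semi-definite iff `λᵢ ≤ σ²` for all `i`. -/
theorem minibatch_gradient_variance_difference {N : ℕ}
    (K U : Matrix (Fin N) (Fin N) ℝ) (lam : Fin N → ℝ)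
    (hK : K.PosDef) (hU : U * Uᵀ = 1) (hUo : Uᵀ * U = 1)
    (hlam : ∀ i, 0 < lam i)
    (hdecomp : K = U * Matrix.diagonal lam * Uᵀ)
    (σ2 : ℝ) (hσ : 0 < σ2)
    (S : Matrix (Fin N) (Fin N) ℝ) (hS : S = σ2 • (1 : Matrix (Fin N) (Fin N) ℝ))
    (Δ : Matrix (Fin N) (Fin N) ℝ)
    (hΔ : Δ = (N : ℝ) • (K * S * K) - (2 * (N : ℝ)) • (K * K * (K + S)⁻¹ * S * K)) :
    Δ = (N : ℝ) • (U * ((Matrix.diagonal lam) ^ 2 * (σ2 • (1 : Matrix (Fin N) (Fin N) ℝ)) *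
        ((1 : Matrix (Fin N) (Fin N) ℝ) -
          (2 : ℝ) • (Matrix.diagonal lam * (Matrix.diagonal lam + S)⁻¹))) * Uᵀ) ∧
      (0 < N → (Δ.PosSemidef ↔ ∀ i, lam i ≤ σ2)) := by
  have hne : ∀ i, lam i + σ2 ≠ 0 := fun i => by have := hlam i; positivity
  set D := Matrix.diagonal lam with hD
  set Dinv := Matrix.diagonal (fun i => (lam i + σ2)⁻¹) with hDinv
  set dσ := Matrix.diagonal (fun _ : Fin N => σ2) with hdσ
  have conj : ∀ A B : Matrix (Fin N) (Fin N) ℝ, (U*A*Uᵀ)*(U*B*Uᵀ) = U*(A*B)*Uᵀ := by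
    intro A B
    simp only [Matrix.mul_assoc]
    rw [← Matrix.mul_assoc Uᵀ U (B*Uᵀ), hUo, Matrix.one_mul]
  have hsmul1 : σ2 • (1 : Matrix (Fin N) (Fin N) ℝ) = dσ := by
    rw [hdσ]
    ext i j
    by_cases h : i = j <;> simp [Matrix.one_apply, Matrix.diagonal_apply, h]
  have hconst : U * dσ * Uᵀ = dσ := by
    rw [← hsmul1, Matrix.mul_smul, Matrix.mul_one, Matrix.smul_mul, hU]
  have hSc : S = U * dσ * Uᵀ := by rw [hS, hsmul1, hconst]
  have hdiagadd : D + dσ = Matrix.diagonal (fun i => lam i + σ2) := by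
    rw [hD, hdσ, Matrix.diagonal_add]
  have hKS : K + S = U * Matrix.diagonal (fun i => lam i + σ2) * Uᵀ := by
    rw [hdecomp, hSc, ← hdiagadd, Matrix.mul_add, Matrix.add_mul]
  have hDDinv : Matrix.diagonal (fun i => lam i + σ2) * Dinv = 1 := by
    rw [hDinv, Matrix.diagonal_mul_diagonal]
    have h1 : (fun i => (lam i + σ2) * (lam i + σ2)⁻¹) = (fun _ : Fin N => (1:ℝ)) :=
      funext fun i => mul_inv_cancel₀ (hne i)
    rw [h1, Matrix.diagonal_one]
  have hinv : (K + S)⁻¹ = U * Dinv * Uᵀ := by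
    apply Matrix.inv_eq_right_inv
    rw [hKS, conj, hDDinv, Matrix.mul_one, hU]
  have hinv2 : (D + S)⁻¹ = Dinv := by
    apply Matrix.inv_eq_right_inv
    rw [hS, hsmul1, hdiagadd, hDDinv]
  have e1 : K*S*K = U*(D*dσ*D)*Uᵀ := by
    rw [hdecomp, hSc, conj, conj]
  have e2 : K*K*(K+S)⁻¹*S*K = U*(D*D*Dinv*dσ*D)*Uᵀ := by
    rw [hinv, hSc, hdecomp, conj, conj, conj, conj]
  set g : Fin N → ℝ := fun i => (N:ℝ) * (lam i^2 * σ2 * (1 - 2*(lam i * (lam i + σ2)⁻¹))) with hg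
  have inner : (N:ℝ) • (D*dσ*D) - (2*(N:ℝ)) • (D*D*Dinv*dσ*D) = Matrix.diagonal g := by
    rw [hD, hDinv, hdσ]
    simp only [Matrix.diagonal_mul_diagonal]
    ext i j
    by_cases h : i = j
    · subst h
      simp only [Matrix.sub_apply, Matrix.smul_apply, Matrix.diagonal_apply_eq, smul_eq_mul, hg]
      ring
    · simp [Matrix.diagonal_apply, h]
  have key : Δ = U * Matrix.diagonal g * Uᵀ := by
    rw [hΔ, e1, e2]
    calc (N:ℝ) • (U*(D*dσ*D)*Uᵀ) - (2*(N:ℝ)) • (U*(D*D*Dinv*dσ*D)*Uᵀ)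
        = U*((N:ℝ) • (D*dσ*D) - (2*(N:ℝ)) • (D*D*Dinv*dσ*D))*Uᵀ := by
          rw [Matrix.mul_sub, Matrix.sub_mul, Matrix.mul_smul, Matrix.smul_mul,
            Matrix.mul_smul, Matrix.smul_mul]
      _ = U*Matrix.diagonal g*Uᵀ := by rw [inner]
  have hMdiag : D ^ 2 * (σ2 • (1 : Matrix (Fin N) (Fin N) ℝ)) *
      ((1 : Matrix (Fin N) (Fin N) ℝ) - (2 : ℝ) • (D * Dinv)) =
      Matrix.diagonal (fun i => lam i^2 * σ2 * (1 - 2*(lam i * (lam i + σ2)⁻¹))) := by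
    rw [pow_two, hsmul1, hD, hDinv]
    have hsub : (1 : Matrix (Fin N) (Fin N) ℝ) -
        (2:ℝ) • (Matrix.diagonal lam * Matrix.diagonal (fun i => (lam i + σ2)⁻¹)) =
        Matrix.diagonal (fun i => 1 - 2*(lam i * (lam i + σ2)⁻¹)) := by
      rw [Matrix.diagonal_mul_diagonal]
      ext i j
      by_cases h : i = j <;>
        simp [Matrix.one_apply, Matrix.diagonal_apply, h]
    rw [hsub, hdσ]
    simp only [Matrix.diagonal_mul_diagonal]
    ext i j
    by_cases h : i = j
    · simp only [Matrix.diagonal_apply, h, if_pos rfl]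
      ring
    · simp [Matrix.diagonal_apply, h]
  constructor
  · rw [hinv2, hMdiag, key]
    have hfin : (N:ℝ) • Matrix.diagonal (fun i => lam i^2 * σ2 * (1 - 2*(lam i * (lam i + σ2)⁻¹)))
        = Matrix.diagonal g := by
      ext i j
      by_cases h : i = j <;>
        simp [Matrix.diagonal_apply, h, hg, mul_comm]
    rw [← Matrix.smul_mul, ← Matrix.mul_smul, hfin]
  · intro hN
    have hN' : (0:ℝ) < (N:ℝ) := by exact_mod_cast hN
    have hUH : (Uᵀ)ᴴ = U := by
      ext i j; simp [Matrix.conjTranspose_apply]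
    have hUH2 : Uᵀ = Uᴴ := by
      ext i j; simp [Matrix.conjTranspose_apply]
    have hgiff : ∀ i, (0 ≤ g i ↔ lam i ≤ σ2) := by
      intro i
      have hd : 0 < lam i + σ2 := by have := hlam i; linarith
      have hgi : g i = (N:ℝ) * σ2 * (lam i)^2 * ((σ2 - lam i)/(lam i + σ2)) := by
        simp only [hg]
        field_simp
        ring
      constructor
      · intro h0
        by_contra hlt
        push_neg at hlt
        have hneg : (σ2 - lam i)/(lam i + σ2) < 0 :=
          div_neg_of_neg_of_pos (by linarith) hd
        have hpos : 0 < (N:ℝ) * σ2 * (lam i)^2 := by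
          have := hlam i; positivity
        rw [hgi] at h0
        nlinarith [mul_neg_of_pos_of_neg hpos hneg]
      · intro h
        rw [hgi]
        exact mul_nonneg (by have := hlam i; positivity) (div_nonneg (by linarith) hd.le)
    constructor
    · intro hpsd
      have h2 := hpsd.mul_mul_conjTranspose_same Uᵀ
      rw [hUH, key] at h2
      have hdg : Uᵀ * (U * Matrix.diagonal g * Uᵀ) * U = Matrix.diagonal g := by
        simp only [← Matrix.mul_assoc]
        rw [hUo, Matrix.one_mul, Matrix.mul_assoc, hUo, Matrix.mul_one]
      rw [hdg] at h2
      intro i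
      exact (hgiff i).mp (Matrix.posSemidef_diagonal_iff.mp h2 i)
    · intro h
      rw [key, hUH2]
      exact (Matrix.posSemidef_diagonal_iff.mpr fun i => (hgiff i).mpr (h i)).mul_mul_conjTranspose_same U
end
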